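/- If f is a holomorphic solution of f''' = -24 f f'' + 36 (f')² on a domain, and A = [[a,b],[c,d]] ∈ GL(2,ℂ), then the function f^A(t) := det(A)/(ct+d)² · f((at+b)/(ct+d)) + c/(2(ct+d)) is also a solution of the same differential equation on a suitable domain. -/

import Mathlib

/-- The `GL(2,ℂ)`-action on functions:
`f^A(t) = det(A)/(ct+d)² · f((at+b)/(ct+d)) + c/(2(ct+d))`. -/
noncomputable def glAction (a b c d : ℂ) (f : ℂ → ℂ) : ℂ → ℂ := fun t =>
  (a * d - b * c) / (c * t + d) ^ 2 * f ((a * t + b) / (c * t + d)) + c / (2 * (c * t + d))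

private lemma aux_lin (c d t : ℂ) : HasDerivAt (fun t : ℂ => c * t + d) c t := by
  simpa using ((hasDerivAt_id t).const_mul c).add_const d

private lemma aux_inv_pow (c d t : ℂ) (h : c * t + d ≠ 0) (n : ℕ) :
    HasDerivAt (fun t : ℂ => ((c * t + d)⁻¹) ^ n)
      (-(n : ℂ) * c * ((c * t + d)⁻¹) ^ (n + 1)) t := by
  have hinv : HasDerivAt (fun t : ℂ => (c * t + d)⁻¹) (-c / (c * t + d) ^ 2) t :=
    (aux_lin c d t).inv h
  cases n with
  | zero => simpa using hasDerivAt_const t (1 : ℂ)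
  | succ m =>
    have H := hinv.pow (m + 1)
    refine H.congr_deriv ?_
    push_cast
    simp only [div_eq_mul_inv, ← inv_pow]
    ring

set_option maxHeartbeats 2000000 in
/-- If `f` is a holomorphic solution of `f''' = -24 f f'' + 36 (f')²` on a domain `U`
and `A = [[a,b],[c,d]] ∈ GL(2,ℂ)`, then `f^A` solves the same equation on a suitable
domain. -/
theorem wdvv_glAction (U : Set ℂ) (hU : IsOpen U) (f : ℂ → ℂ)
    (hf : AnalyticOnNhd ℂ f U)
    (hode : ∀ t ∈ U, iteratedDeriv 3 f t =
      -24 * f t * iteratedDeriv 2 f t + 36 * (deriv f t) ^ 2)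
    (a b c d : ℂ) (hA : a * d - b * c ≠ 0) :
    ∀ t : ℂ, c * t + d ≠ 0 → (a * t + b) / (c * t + d) ∈ U →
      iteratedDeriv 3 (glAction a b c d f) t =
        -24 * glAction a b c d f t * iteratedDeriv 2 (glAction a b c d f) t
          + 36 * (deriv (glAction a b c d f) t) ^ 2 := by
  intro t0 h0 hs0
  -- abbreviations
  have hf1A : AnalyticOnNhd ℂ (deriv f) U := hf.deriv
  have hf2A : AnalyticOnNhd ℂ (deriv (deriv f)) U := hf1A.deriv
  -- the good domain
  set V : Set ℂ := {t : ℂ | c * t + d ≠ 0 ∧ (a * t + b) / (c * t + d) ∈ U} with hVdef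
  have hVopen : IsOpen V := by
    have hlin : Continuous fun t : ℂ => c * t + d := by continuity
    have hlin2 : Continuous fun t : ℂ => a * t + b := by continuity
    have hop : IsOpen {t : ℂ | c * t + d ≠ 0} := isOpen_compl_singleton.preimage hlin
    have hcont : ContinuousOn (fun t : ℂ => (a * t + b) / (c * t + d))
        {t : ℂ | c * t + d ≠ 0} :=
      ContinuousOn.div hlin2.continuousOn hlin.continuousOn fun t ht => ht
    have h2 := hcont.isOpen_inter_preimage hop hU
    have : V = {t : ℂ | c * t + d ≠ 0} ∩ (fun t : ℂ => (a * t + b) / (c * t + d)) ⁻¹' U := by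
      ext t
      simp [hVdef]
    rw [this]
    exact h2
  have ht0V : t0 ∈ V := ⟨h0, hs0⟩
  -- derivative formulas
  set G1 : ℂ → ℂ := fun t =>
    -2 * c * (a * d - b * c) * ((c * t + d)⁻¹) ^ 3 * f ((a * t + b) / (c * t + d))
      + (a * d - b * c) ^ 2 * ((c * t + d)⁻¹) ^ 4 * deriv f ((a * t + b) / (c * t + d))
      - c ^ 2 / 2 * ((c * t + d)⁻¹) ^ 2 with hG1def
  set G2 : ℂ → ℂ := fun t =>
    6 * c ^ 2 * (a * d - b * c) * ((c * t + d)⁻¹) ^ 4 * f ((a * t + b) / (c * t + d))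
      - 6 * c * (a * d - b * c) ^ 2 * ((c * t + d)⁻¹) ^ 5 * deriv f ((a * t + b) / (c * t + d))
      + (a * d - b * c) ^ 3 * ((c * t + d)⁻¹) ^ 6 * deriv (deriv f) ((a * t + b) / (c * t + d))
      + c ^ 3 * ((c * t + d)⁻¹) ^ 3 with hG2def
  set G3 : ℂ → ℂ := fun t =>
    -24 * c ^ 3 * (a * d - b * c) * ((c * t + d)⁻¹) ^ 5 * f ((a * t + b) / (c * t + d))
      + 36 * c ^ 2 * (a * d - b * c) ^ 2 * ((c * t + d)⁻¹) ^ 6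
          * deriv f ((a * t + b) / (c * t + d))
      - 12 * c * (a * d - b * c) ^ 3 * ((c * t + d)⁻¹) ^ 7
          * deriv (deriv f) ((a * t + b) / (c * t + d))
      + (a * d - b * c) ^ 4 * ((c * t + d)⁻¹) ^ 8
          * deriv (deriv (deriv f)) ((a * t + b) / (c * t + d))
      - 3 * c ^ 4 * ((c * t + d)⁻¹) ^ 4 with hG3def
  -- basic derivative facts at points of V
  have hsD : ∀ t ∈ V, HasDerivAt (fun t : ℂ => (a * t + b) / (c * t + d))
      ((a * d - b * c) * ((c * t + d)⁻¹) ^ 2) t := by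
    intro t ht
    have H := (((hasDerivAt_id t).const_mul a).add_const b).div (aux_lin c d t) ht.1
    refine H.congr_deriv ?_
    simp only [id]
    field_simp
    ring
  have hcomp : ∀ (g : ℂ → ℂ), AnalyticOnNhd ℂ g U → ∀ t ∈ V,
      HasDerivAt (fun t : ℂ => g ((a * t + b) / (c * t + d)))
        (deriv g ((a * t + b) / (c * t + d)) * ((a * d - b * c) * ((c * t + d)⁻¹) ^ 2)) t := by
    intro g hg t ht
    exact ((hg _ ht.2).differentiableAt.hasDerivAt).comp t (hsD t ht)
  -- the three HasDerivAt steps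
  have hD1 : ∀ t ∈ V, HasDerivAt (glAction a b c d f) (G1 t) t := by
    intro t ht
    have H := (((aux_inv_pow c d t ht.1 2).const_mul (a * d - b * c)).mul
        (hcomp f hf t ht)).add
      ((aux_inv_pow c d t ht.1 1).const_mul (c / 2))
    have hfun : glAction a b c d f = fun t : ℂ =>
        (a * d - b * c) * ((c * t + d)⁻¹) ^ 2 * f ((a * t + b) / (c * t + d))
          + c / 2 * ((c * t + d)⁻¹) ^ 1 := by
      funext u
      simp only [glAction, div_eq_mul_inv, mul_inv, ← inv_pow]
      ring
    rw [hfun, hG1def]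
    refine H.congr_deriv ?_
    push_cast
    ring
  have hD2 : ∀ t ∈ V, HasDerivAt G1 (G2 t) t := by
    intro t ht
    have H := ((((aux_inv_pow c d t ht.1 3).const_mul (-2 * c * (a * d - b * c))).mul
        (hcomp f hf t ht)).add
      (((aux_inv_pow c d t ht.1 4).const_mul ((a * d - b * c) ^ 2)).mul
        (hcomp (deriv f) hf1A t ht))).sub
      ((aux_inv_pow c d t ht.1 2).const_mul (c ^ 2 / 2))
    rw [hG1def, hG2def]
    refine H.congr_deriv ?_
    push_cast
    ring
  have hD3 : ∀ t ∈ V, HasDerivAt G2 (G3 t) t := by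
    intro t ht
    have H := (((((aux_inv_pow c d t ht.1 4).const_mul (6 * c ^ 2 * (a * d - b * c))).mul
        (hcomp f hf t ht)).sub
      (((aux_inv_pow c d t ht.1 5).const_mul (6 * c * (a * d - b * c) ^ 2)).mul
        (hcomp (deriv f) hf1A t ht))).add
      (((aux_inv_pow c d t ht.1 6).const_mul ((a * d - b * c) ^ 3)).mul
        (hcomp (deriv (deriv f)) hf2A t ht))).add
      ((aux_inv_pow c d t ht.1 3).const_mul (c ^ 3))
    rw [hG2def, hG3def]
    refine H.congr_deriv ?_
    push_cast
    ring
  -- identify the iterated derivatives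
  have e1 : ∀ t ∈ V, deriv (glAction a b c d f) t = G1 t := fun t ht => (hD1 t ht).deriv
  have e2 : ∀ t ∈ V, deriv (deriv (glAction a b c d f)) t = G2 t := by
    intro t ht
    have hev : deriv (glAction a b c d f) =ᶠ[nhds t] G1 :=
      Filter.eventuallyEq_of_mem (hVopen.mem_nhds ht) e1
    rw [hev.deriv_eq]
    exact (hD2 t ht).deriv
  have e3 : ∀ t ∈ V, deriv (deriv (deriv (glAction a b c d f))) t = G3 t := by
    intro t ht
    have hev : deriv (deriv (glAction a b c d f)) =ᶠ[nhds t] G2 :=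
      Filter.eventuallyEq_of_mem (hVopen.mem_nhds ht) e2
    rw [hev.deriv_eq]
    exact (hD3 t ht).deriv
  have hit3 : iteratedDeriv 3 (glAction a b c d f) = deriv (deriv (deriv (glAction a b c d f))) := by
    rw [show (3:ℕ) = 2 + 1 from rfl, iteratedDeriv_succ,
      show (2:ℕ) = 1 + 1 from rfl, iteratedDeriv_succ, iteratedDeriv_one]
  have hit2 : iteratedDeriv 2 (glAction a b c d f) = deriv (deriv (glAction a b c d f)) := by
    rw [show (2:ℕ) = 1 + 1 from rfl, iteratedDeriv_succ, iteratedDeriv_one]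
  rw [hit3, hit2, e3 t0 ht0V, e2 t0 ht0V, e1 t0 ht0V]
  -- use the ODE for f at the transformed point
  have hodes : deriv (deriv (deriv f)) ((a * t0 + b) / (c * t0 + d)) =
      -24 * f ((a * t0 + b) / (c * t0 + d))
          * deriv (deriv f) ((a * t0 + b) / (c * t0 + d))
        + 36 * (deriv f ((a * t0 + b) / (c * t0 + d))) ^ 2 := by
    have := hode _ hs0
    rwa [show (3:ℕ) = 2 + 1 from rfl, iteratedDeriv_succ,
      show (2:ℕ) = 1 + 1 from rfl, iteratedDeriv_succ, iteratedDeriv_one] at this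
  simp only [hG1def, hG2def, hG3def]
  rw [hodes]
  simp only [glAction, div_eq_mul_inv, mul_inv, ← inv_pow]
  ring
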